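/- Let n ≥ 1, let H = ∏_{i=1}^n [a_i, b_i] ⊆ ℝ^n be a rectangle with a_i < b_i for all i, and let X ⊆ H. Then for every integer κ ≥ 1 the rectangular κ-grid measure of X is at most twice its Lebesgue outer measure: λ^κ(X) ≤ 2·λ*(X). -/

import Mathlib

open MeasureTheory Set Filter

/-- The κ-tile of the rectangle `∏ i, [a i, b i]` indexed by the multi-index `k`. -/
noncomputable def tile (n : ℕ) (a b : Fin n → ℝ) (κ : ℕ) (k : Fin n → ℕ) :
    Set (Fin n → ℝ) :=
  Set.univ.pi fun i =>
    Set.Icc (a i + (k i : ℝ) / κ * (b i - a i)) (a i + ((k i : ℝ) + 1) / κ * (b i - a i))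

/-- The common volume of a κ-tile of the rectangle `∏ i, [a i, b i]`. -/
noncomputable def tileVol (n : ℕ) (a b : Fin n → ℝ) (κ : ℕ) : ℝ :=
  ∏ i, (b i - a i) / κ

/-- The tile indexed by `k` belongs to `Tiles^κ(X)`, i.e. the Lebesgue outer measure of the
intersection of the tile with `X` is at least half the volume of the tile. -/
def isApproxTile (n : ℕ) (a b : Fin n → ℝ) (κ : ℕ) (X : Set (Fin n → ℝ))
    (k : Fin n → Fin κ) : Prop :=
  ENNReal.ofReal (tileVol n a b κ) / 2 ≤ volume (tile n a b κ (fun i => (k i : ℕ)) ∩ X)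

open Classical in
/-- The rectangular κ-grid measure `λ^κ(X)`: the total volume of the κ-tiles approximating `X`. -/
noncomputable def gridMeasure (n : ℕ) (a b : Fin n → ℝ) (κ : ℕ)
    (X : Set (Fin n → ℝ)) : ℝ :=
  ∑ k : Fin n → Fin κ, if isApproxTile n a b κ X k then tileVol n a b κ else 0

/-- The half-open version of a κ-tile. -/
noncomputable def tile' (n : ℕ) (a b : Fin n → ℝ) (κ : ℕ) (k : Fin n → ℕ) :
    Set (Fin n → ℝ) :=
  Set.univ.pi fun i =>
    Set.Ico (a i + (k i : ℝ) / κ * (b i - a i)) (a i + ((k i : ℝ) + 1) / κ * (b i - a i))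

/-- For any subset `X` of the rectangle `H = ∏ i, [a i, b i]` and any integer `κ ≥ 1`,
the rectangular κ-grid measure of `X` is at most twice its Lebesgue outer measure. -/
theorem gridMeasure_le_two_mul_outerMeasure (n : ℕ) (hn : 1 ≤ n) (a b : Fin n → ℝ)
    (hab : ∀ i, a i < b i) (X : Set (Fin n → ℝ))
    (hX : X ⊆ Set.univ.pi fun i => Set.Icc (a i) (b i)) (κ : ℕ) (hκ : 1 ≤ κ) :
    ENNReal.ofReal (gridMeasure n a b κ X) ≤ 2 * volume X := by
  classical
  have hκ0 : (0:ℝ) < κ := by exact_mod_cast hκ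
  have hlen : ∀ i, (0:ℝ) < (b i - a i) / κ := fun i =>
    div_pos (sub_pos.mpr (hab i)) hκ0
  have hsub : ∀ (k : Fin n → ℕ) (i : Fin n), (a i + ((k i : ℝ) + 1) / κ * (b i - a i))
      - (a i + (k i : ℝ) / κ * (b i - a i)) = (b i - a i) / κ := by
    intro k i
    field_simp
    ring
  -- volumes of tiles
  have hvolA : ∀ k : Fin n → ℕ, volume (tile n a b κ k) = ENNReal.ofReal (tileVol n a b κ) := by
    intro k
    rw [tile, volume_pi_pi, tileVol,
      ENNReal.ofReal_prod_of_nonneg (fun i _ => (hlen i).le)]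
    refine Finset.prod_congr rfl fun i _ => ?_
    rw [Real.volume_Icc, hsub]
  have hvolB : ∀ k : Fin n → ℕ, volume (tile' n a b κ k) = ENNReal.ofReal (tileVol n a b κ) := by
    intro k
    rw [tile', volume_pi_pi, tileVol,
      ENNReal.ofReal_prod_of_nonneg (fun i _ => (hlen i).le)]
    refine Finset.prod_congr rfl fun i _ => ?_
    rw [Real.volume_Ico, hsub]
  have hBA : ∀ k : Fin n → ℕ, tile' n a b κ k ⊆ tile n a b κ k := by
    intro k x hx i hi
    exact Set.Ico_subset_Icc_self (hx i hi)
  have hBmeas : ∀ k : Fin n → ℕ, MeasurableSet (tile' n a b κ k) := by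
    intro k
    exact MeasurableSet.univ_pi fun i => measurableSet_Ico
  have hAmeas : ∀ k : Fin n → ℕ, MeasurableSet (tile n a b κ k) := by
    intro k
    exact MeasurableSet.univ_pi fun i => measurableSet_Icc
  -- the difference is null
  have hdiff : ∀ k : Fin n → ℕ, volume (tile n a b κ k \ tile' n a b κ k) = 0 := by
    intro k
    have := measure_diff (hBA k) (hBmeas k).nullMeasurableSet
      (by rw [hvolB k]; exact ENNReal.ofReal_ne_top)
    rw [this, hvolA, hvolB, tsub_self]
  set ν := volume.restrict X with hν
  -- key pointwise bound
  have hkey : ∀ k : Fin n → Fin κ, isApproxTile n a b κ X k →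
      ENNReal.ofReal (tileVol n a b κ) ≤ 2 * ν (tile' n a b κ fun i => (k i : ℕ)) := by
    intro k hk
    have h1 : volume (tile n a b κ (fun i => (k i : ℕ)) ∩ X)
        ≤ ν (tile' n a b κ fun i => (k i : ℕ)) := by
      have h2 : volume (tile n a b κ (fun i => (k i : ℕ)) ∩ X)
          = ν (tile n a b κ fun i => (k i : ℕ)) := by
        rw [hν, Measure.restrict_apply (hAmeas _)]
      rw [h2]
      have h3 : ν (tile n a b κ fun i => (k i : ℕ))
          ≤ ν (tile' n a b κ fun i => (k i : ℕ))
            + ν (tile n a b κ (fun i => (k i : ℕ)) \ tile' n a b κ fun i => (k i : ℕ)) := by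
        refine le_trans (measure_mono ?_) (measure_union_le _ _)
        intro x hx
        by_cases hxB : x ∈ tile' n a b κ fun i => (k i : ℕ)
        · exact Or.inl hxB
        · exact Or.inr ⟨hx, hxB⟩
      have h4 : ν (tile n a b κ (fun i => (k i : ℕ)) \ tile' n a b κ fun i => (k i : ℕ)) = 0 :=
        le_antisymm (le_trans (Measure.restrict_le_self _) (hdiff _).le) zero_le
      rw [h4, add_zero] at h3
      exact h3
    have := le_trans hk h1
    rwa [ENNReal.div_le_iff_le_mul (Or.inl two_ne_zero) (Or.inl ENNReal.ofNat_ne_top),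
      mul_comm] at this
  -- disjointness of half-open tiles
  have hdisj : ∀ k k' : Fin n → Fin κ, k ≠ k' →
      Disjoint (tile' n a b κ fun i => (k i : ℕ)) (tile' n a b κ fun i => (k' i : ℕ)) := by
    intro k k' hne
    rw [Set.disjoint_left]
    intro x hx hx'
    obtain ⟨i, hi⟩ : ∃ i, k i ≠ k' i := by
      by_contra h
      push_neg at h
      exact hne (funext h)
    have hxi := hx i (mem_univ i)
    have hxi' := hx' i (mem_univ i)
    have key : ∀ m m' : ℕ, m < m' →
        x i ∈ Set.Ico (a i + (m : ℝ) / κ * (b i - a i)) (a i + ((m : ℝ) + 1) / κ * (b i - a i)) →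
        x i ∈ Set.Ico (a i + (m' : ℝ) / κ * (b i - a i)) (a i + ((m' : ℝ) + 1) / κ * (b i - a i)) →
        False := by
      intro m m' hmm h h'
      have : (m : ℝ) + 1 ≤ (m' : ℝ) := by exact_mod_cast hmm
      have hle : a i + ((m : ℝ) + 1) / κ * (b i - a i) ≤ a i + (m' : ℝ) / κ * (b i - a i) := by
        have h2 : ((m : ℝ) + 1) / κ ≤ (m' : ℝ) / κ := by gcongr
        nlinarith [sub_pos.mpr (hab i), h2]
      have := h'.1
      have := h.2
      linarith
    rcases lt_or_gt_of_ne (fun h => hi (Fin.ext h) : (k i : ℕ) ≠ (k' i : ℕ)) with hlt | hgt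
    · exact key _ _ hlt hxi hxi'
    · exact key _ _ hgt hxi' hxi
  -- now assemble
  set S : Finset (Fin n → Fin κ) := Finset.univ.filter (isApproxTile n a b κ X) with hS
  have hgm : gridMeasure n a b κ X = ∑ k ∈ S, tileVol n a b κ := by
    rw [gridMeasure, hS, Finset.sum_filter]
  have htv0 : (0:ℝ) ≤ tileVol n a b κ := Finset.prod_nonneg fun i _ => (hlen i).le
  rw [hgm, ENNReal.ofReal_sum_of_nonneg (fun _ _ => htv0)]
  calc ∑ k ∈ S, ENNReal.ofReal (tileVol n a b κ)
      ≤ ∑ k ∈ S, 2 * ν (tile' n a b κ fun i => (k i : ℕ)) := by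
        refine Finset.sum_le_sum fun k hk => hkey k ?_
        simpa [hS] using hk
    _ = 2 * ∑ k ∈ S, ν (tile' n a b κ fun i => (k i : ℕ)) := by
        rw [Finset.mul_sum]
    _ = 2 * ν (⋃ k ∈ S, tile' n a b κ fun i => (k i : ℕ)) := by
        rw [measure_biUnion_finset (fun k _ k' _ h => hdisj k k' h) fun k _ => hBmeas _]
    _ ≤ 2 * ν Set.univ := by
        gcongr
        exact subset_univ _
    _ = 2 * volume X := by rw [hν, Measure.restrict_apply_univ]
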